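/- The column-strict recurrence (dual Pieri / branching rule) for Schur polynomials: for a partition λ and a single extra variable z, s_λ(x_1,...,x_n, z) = ∑_{μ} s_μ(x_1,...,x_n) z^{|λ|−|μ|}, where the sum is over partitions μ ⊆ λ such that λ/μ is a horizontal strip. -/

import Mathlib

open MvPolynomial

/-- The complete homogeneous symmetric polynomial with integer index: `0` for negative
index, `h_k` for `k ≥ 0`. -/
noncomputable def hInt (nv : ℕ) (k : ℤ) : MvPolynomial (Fin nv) ℚ :=
  if 0 ≤ k then hsymm (Fin nv) ℚ k.toNat else 0

/-- The Schur polynomial in `nv` variables of a partition given by its first `N` parts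
`lam : Fin N → ℕ`, defined by the Jacobi–Trudi determinant
`s_λ = det(h_{λ_i + j - i})_{i,j < N}`. -/
noncomputable def schur (nv N : ℕ) (lam : Fin N → ℕ) : MvPolynomial (Fin nv) ℚ :=
  Matrix.det (Matrix.of fun i j : Fin N => hInt nv ((lam i : ℤ) + (j : ℤ) - (i : ℤ)))

noncomputable def schurInt (nv N : ℕ) (c : Fin N → ℤ) : MvPolynomial (Fin nv) ℚ :=
  Matrix.det (Matrix.of fun i j : Fin N => hInt nv (c i + (j : ℤ) - (i : ℤ)))

theorem hsymm_option_succ (σ : Type*) [Fintype σ] [DecidableEq σ] (R : Type*) [CommRing R] (k : ℕ) :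
    hsymm (Option σ) R (k+1) =
      X none * hsymm (Option σ) R k + rename some (hsymm σ R (k+1)) := by
  rw [hsymm, ← Equiv.sum_comp (symOptionSuccEquiv (α := σ) (n := k)).symm, Fintype.sum_sum_type]
  congr 1
  · rw [hsymm, Finset.mul_sum]
    refine Finset.sum_congr rfl fun s _ => ?_
    show ((Sym.cons none s).1.map X).prod = _
    rw [Sym.cons]
    simp
  · rw [hsymm, map_sum]
    refine Finset.sum_congr rfl fun s _ => ?_
    show (((s.map Function.Embedding.some).1.map X).prod) = _
    rw [Sym.map]
    simp [Multiset.map_map, Function.comp, ← Multiset.prod_hom']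

theorem hsymm_fin_succ (n k : ℕ) :
    hsymm (Fin (n+1)) ℚ (k+1) =
      X (Fin.last n) * hsymm (Fin (n+1)) ℚ k
        + rename Fin.castSucc (hsymm (Fin n) ℚ (k+1)) := by
  have h := congrArg (rename (finSuccEquivLast (n := n)).symm)
    (hsymm_option_succ (Fin n) ℚ k)
  rw [rename_hsymm] at h
  have hc : ((finSuccEquivLast (n := n)).symm ∘ some) = (Fin.castSucc : Fin n → Fin (n+1)) := by
    ext i; simp
  rw [h, map_add, map_mul, rename_X, rename_hsymm, rename_rename, hc]
  simp

theorem hsymm_expand (n k : ℕ) :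
    hsymm (Fin (n+1)) ℚ k =
      ∑ m ∈ Finset.range (k+1),
        X (Fin.last n) ^ (k - m) * rename Fin.castSucc (hsymm (Fin n) ℚ m) := by
  induction k with
  | zero => simp [hsymm_zero]
  | succ k ih =>
    conv_rhs => rw [Finset.sum_range_succ]
    rw [hsymm_fin_succ, ih, Finset.mul_sum]
    simp only [Nat.sub_self, pow_zero, one_mul]
    congr 1
    refine Finset.sum_congr rfl fun m hm => ?_
    rw [Finset.mem_range] at hm
    rw [← mul_assoc, ← pow_succ']
    congr 2
    omega

theorem hInt_expand (n : ℕ) (k : ℤ) (R : ℕ) (hk : k ≤ R) :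
    hInt (n+1) k =
      ∑ r ∈ Finset.range (R+1),
        X (Fin.last n) ^ r * rename Fin.castSucc (hInt n (k - r)) := by
  by_cases h0 : 0 ≤ k
  · obtain ⟨m, rfl⟩ : ∃ m : ℕ, k = m := ⟨k.toNat, (Int.toNat_of_nonneg h0).symm⟩
    have hmR : m ≤ R := by exact_mod_cast hk
    rw [← Finset.sum_subset (Finset.range_subset_range.2 (by omega) :
        Finset.range (m+1) ⊆ Finset.range (R+1))
        (fun x hx hnx => by
          rw [Finset.mem_range] at hx hnx
          rw [hInt, if_neg (by push_cast; omega : ¬ (0:ℤ) ≤ (m:ℤ) - x)]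
          simp)]
    rw [hInt, if_pos h0, Int.toNat_natCast, hsymm_expand]
    conv_rhs => rw [← Finset.sum_range_reflect]
    refine Finset.sum_congr rfl fun j hj => ?_
    rw [Finset.mem_range] at hj
    have h1 : m + 1 - 1 - j = m - j := by omega
    rw [h1, hInt, if_pos (by push_cast; omega : (0:ℤ) ≤ (m:ℤ) - ((m - j : ℕ) : ℤ))]
    have h2 : ((m:ℤ) - ((m - j : ℕ) : ℤ)).toNat = j := by omega
    rw [h2]
  · rw [hInt, if_neg h0]
    symm
    refine Finset.sum_eq_zero fun r hr => ?_
    rw [hInt, if_neg (by omega : ¬ (0:ℤ) ≤ k - r)]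
    simp

theorem step1 (n N : ℕ) (lam : Fin N → ℕ) :
    schur (n+1) N lam =
      ∑ mu ∈ Fintype.piFinset (fun i : Fin N => Finset.Icc ((i:ℤ)+1-N) (lam i)),
        X (Fin.last n) ^ (∑ i, ((lam i : ℤ) - mu i)).toNat *
          rename Fin.castSucc (schurInt n N mu) := by
  classical
  have hrow : (Matrix.of fun i j : Fin N => hInt (n+1) ((lam i : ℤ) + j - i)) =
      fun i => ∑ r ∈ Finset.range (lam i + (N - 1 - i.1) + 1),
        ((X (Fin.last n) ^ r : MvPolynomial (Fin (n+1)) ℚ)) •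
          fun j : Fin N => rename Fin.castSucc (hInt n ((lam i : ℤ) + j - i - r)) := by
    funext i j
    rw [Finset.sum_apply]
    have hR : ((lam i : ℤ) + j - i) ≤ (lam i + (N - 1 - i.1) : ℕ) := by
      have := i.2; have := j.2; push_cast; omega
    rw [show (Matrix.of fun i j : Fin N => hInt (n+1) ((lam i : ℤ) + j - i)) i j
        = hInt (n+1) ((lam i : ℤ) + j - i) from rfl,
      hInt_expand n _ _ hR]
    exact Finset.sum_congr rfl fun r _ => rfl
  have key := (Matrix.detRowAlternating (n := Fin N)
      (R := MvPolynomial (Fin (n+1)) ℚ)).toMultilinearMap.map_sum_finset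
    (g := fun (i : Fin N) (r : ℕ) => ((X (Fin.last n) ^ r : MvPolynomial (Fin (n+1)) ℚ)) •
      fun j : Fin N => rename Fin.castSucc (hInt n ((lam i : ℤ) + j - i - r)))
    (A := fun i => Finset.range (lam i + (N - 1 - i.1) + 1))
  have lhs_eq : schur (n+1) N lam =
      (Matrix.detRowAlternating (n := Fin N) (R := MvPolynomial (Fin (n+1)) ℚ)).toMultilinearMap
        (fun i => ∑ r ∈ Finset.range (lam i + (N - 1 - i.1) + 1),
          ((X (Fin.last n) ^ r : MvPolynomial (Fin (n+1)) ℚ)) •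
            fun j : Fin N => rename Fin.castSucc (hInt n ((lam i : ℤ) + j - i - r))) := by
    rw [schur, ← hrow]; rfl
  rw [lhs_eq, key]
  refine Finset.sum_nbij'
    (f := fun r : Fin N → ℕ => (Matrix.detRowAlternating (n := Fin N)
        (R := MvPolynomial (Fin (n+1)) ℚ)).toMultilinearMap
      (fun i => ((X (Fin.last n) ^ r i : MvPolynomial (Fin (n+1)) ℚ)) •
        fun j : Fin N => rename Fin.castSucc (hInt n ((lam i : ℤ) + j - i - r i))))
    (g := fun mu : Fin N → ℤ => X (Fin.last n) ^ (∑ i, ((lam i : ℤ) - mu i)).toNat *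
      rename Fin.castSucc (schurInt n N mu))
    (fun r i => (lam i : ℤ) - r i)
    (fun mu i => ((lam i : ℤ) - mu i).toNat) ?_ ?_ ?_ ?_ ?_
  · intro r hr
    rw [Fintype.mem_piFinset] at hr ⊢
    intro i
    have := (Finset.mem_range.1 (hr i)); have := i.2
    rw [Finset.mem_Icc]
    try dsimp only
    omega
  · intro mu hmu
    rw [Fintype.mem_piFinset] at hmu ⊢
    intro i
    have := Finset.mem_Icc.1 (hmu i); have := i.2
    rw [Finset.mem_range]
    try dsimp only
    omega
  · intro r hr
    funext i
    rw [Fintype.mem_piFinset] at hr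
    have := Finset.mem_range.1 (hr i)
    dsimp only
    omega
  · intro mu hmu
    funext i
    rw [Fintype.mem_piFinset] at hmu
    have := Finset.mem_Icc.1 (hmu i)
    dsimp only
    omega
  · intro r hr
    rw [Fintype.mem_piFinset] at hr
    try dsimp only
    rw [MultilinearMap.map_smul_univ]
    have he : (∑ i, ((lam i : ℤ) - ((lam i : ℤ) - r i))).toNat = ∑ i, r i := by
      simp only [sub_sub_cancel, ← Nat.cast_sum, Int.toNat_natCast]
    rw [he, smul_eq_mul, Finset.prod_pow_eq_pow_sum]
    congr 1
    have : schurInt n N (fun i => (lam i : ℤ) - r i) =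
        Matrix.det (Matrix.of fun i j : Fin N => hInt n ((lam i : ℤ) + j - i - r i)) := by
      rw [schurInt]
      congr 1
      funext i j
      show hInt n (((lam i : ℤ) - r i) + j - i) = hInt n ((lam i : ℤ) + j - i - r i)
      ring_nf
    rw [this, AlgHom.map_det]
    rfl

/-- swap rows k, k+1 on the level of the integer vector -/
def swapAt {N : ℕ} (mu : Fin N → ℤ) (k : ℕ) (hk : k + 1 < N) : Fin N → ℤ :=
  fun j => if (j : ℕ) = k then mu ⟨k+1, hk⟩ - 1
           else if (j : ℕ) = k + 1 then mu ⟨k, Nat.lt_of_succ_lt hk⟩ + 1 else mu j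

lemma sum_swapAt {N : ℕ} (mu : Fin N → ℤ) (k : ℕ) (hk : k + 1 < N) :
    ∑ j, swapAt mu k hk j = ∑ j, mu j := by
  have h1 : ∀ j : Fin N, swapAt mu k hk j - mu j =
      (if j = (⟨k, Nat.lt_of_succ_lt hk⟩ : Fin N) then mu ⟨k+1, hk⟩ - 1 - mu ⟨k, Nat.lt_of_succ_lt hk⟩ else 0)
      + (if j = (⟨k+1, hk⟩ : Fin N) then mu ⟨k, Nat.lt_of_succ_lt hk⟩ + 1 - mu ⟨k+1, hk⟩ else 0) := by
    intro j
    rcases eq_or_ne (j : ℕ) k with h0 | h0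
    · have : j = (⟨k, Nat.lt_of_succ_lt hk⟩ : Fin N) := Fin.ext h0
      subst this
      simp [swapAt, Fin.ext_iff]
    · rcases eq_or_ne (j : ℕ) (k+1) with h1 | h1
      · have : j = (⟨k+1, hk⟩ : Fin N) := Fin.ext h1
        subst this
        simp [swapAt, Fin.ext_iff] at h0 ⊢
      · simp [swapAt, h0, h1, Fin.ext_iff]
  have h2 : ∑ j, (swapAt mu k hk j - mu j) = 0 := by
    rw [Finset.sum_congr rfl fun j _ => h1 j, Finset.sum_add_distrib]
    simp only [Finset.sum_ite_eq', Finset.mem_univ, if_true]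
    ring
  rw [Finset.sum_sub_distrib] at h2
  omega

lemma schurInt_swapAt (n N : ℕ) (mu : Fin N → ℤ) (k : ℕ) (hk : k + 1 < N) :
    schurInt n N (swapAt mu k hk) = - schurInt n N mu := by
  set i0 : Fin N := ⟨k, Nat.lt_of_succ_lt hk⟩
  set i1 : Fin N := ⟨k+1, hk⟩
  have h01 : i0 ≠ i1 := by simp [i0, i1, Fin.ext_iff]
  have hM : (Matrix.of fun i j : Fin N => hInt n (swapAt mu k hk i + (j:ℤ) - (i:ℤ)))
      = (Matrix.of fun i j : Fin N => hInt n (mu i + (j:ℤ) - (i:ℤ))).submatrix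
          (Equiv.swap i0 i1) id := by
    funext i j
    rcases eq_or_ne i i0 with h0 | h0
    · subst h0
      simp only [Matrix.submatrix_apply, Equiv.swap_apply_left, id, Matrix.of_apply]
      have : swapAt mu k hk i0 = mu i1 - 1 := by simp [swapAt, i0, i1]
      rw [this]
      congr 1
      simp [i0, i1]
      ring
    · rcases eq_or_ne i i1 with h1 | h1
      · subst h1
        simp only [Matrix.submatrix_apply, Equiv.swap_apply_right, id, Matrix.of_apply]
        have : swapAt mu k hk i1 = mu i0 + 1 := by
          simp [swapAt, i1, i0, Fin.ext_iff]
        rw [this]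
        congr 1
        simp [i0, i1]
        ring
      · simp only [Matrix.submatrix_apply, Equiv.swap_apply_of_ne_of_ne h0 h1, id,
          Matrix.of_apply]
        have heq : swapAt mu k hk i = mu i := by
          show (if (i : ℕ) = k then mu ⟨k+1, hk⟩ - 1
              else if (i : ℕ) = k + 1 then mu ⟨k, Nat.lt_of_succ_lt hk⟩ + 1 else mu i) = mu i
          rw [if_neg (fun h => h0 (Fin.ext h)), if_neg (fun h => h1 (Fin.ext h))]
        rw [heq]
  rw [schurInt, hM, Matrix.det_permute, Equiv.Perm.sign_swap h01]
  simp [schurInt]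

lemma schurInt_eq_zero_of_fixed (n N : ℕ) (mu : Fin N → ℤ) (k : ℕ) (hk : k + 1 < N)
    (hfix : swapAt mu k hk = mu) : schurInt n N mu = 0 := by
  set i0 : Fin N := ⟨k, Nat.lt_of_succ_lt hk⟩
  set i1 : Fin N := ⟨k+1, hk⟩
  have h01 : i0 ≠ i1 := by simp [i0, i1, Fin.ext_iff]
  have hval : mu i0 = mu i1 - 1 := by
    have := congrFun hfix i0
    simpa [swapAt, i0] using this.symm
  refine Matrix.det_zero_of_row_eq h01 ?_
  funext j
  show hInt n (mu i0 + (j:ℤ) - (i0:ℤ)) = hInt n (mu i1 + (j:ℤ) - (i1:ℤ))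
  congr 1
  rw [hval]
  simp [i0, i1]
  ring

def Qb {N : ℕ} (lam : Fin N → ℕ) (mu : Fin N → ℤ) (k : ℕ) : Prop :=
  ∃ hk : k + 1 < N, mu ⟨k, Nat.lt_of_succ_lt hk⟩ < (lam ⟨k+1, hk⟩ : ℤ)

lemma swapAt_swapAt {N : ℕ} (mu : Fin N → ℤ) (k : ℕ) (hk : k + 1 < N) :
    swapAt (swapAt mu k hk) k hk = mu := by
  funext j
  rcases eq_or_ne (j : ℕ) k with h0 | h0
  · have hj : j = (⟨k, Nat.lt_of_succ_lt hk⟩ : Fin N) := Fin.ext h0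
    subst hj
    simp [swapAt]
  · rcases eq_or_ne (j : ℕ) (k+1) with h1 | h1
    · have hj : j = (⟨k+1, hk⟩ : Fin N) := Fin.ext h1
      subst hj
      simp [swapAt]
    · simp [swapAt, h0, h1]

lemma swapAt_congr {N : ℕ} (mu : Fin N → ℤ) (k k' : ℕ) (h : k = k') (hk : k + 1 < N)
    (hk' : k' + 1 < N) : swapAt mu k hk = swapAt mu k' hk' := by subst h; rfl

lemma swapAt_apply_fst {N : ℕ} (mu : Fin N → ℤ) (k : ℕ) (hk : k + 1 < N) (j : Fin N)
    (h : (j : ℕ) = k) : swapAt mu k hk j = mu ⟨k+1, hk⟩ - 1 := by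
  simp [swapAt, h]

lemma swapAt_apply_snd {N : ℕ} (mu : Fin N → ℤ) (k : ℕ) (hk : k + 1 < N) (j : Fin N)
    (h : (j : ℕ) = k + 1) : swapAt mu k hk j = mu ⟨k, Nat.lt_of_succ_lt hk⟩ + 1 := by
  have h' : (j : ℕ) ≠ k := by omega
  simp [swapAt, h, h']

lemma swapAt_apply_of_ne {N : ℕ} (mu : Fin N → ℤ) (k : ℕ) (hk : k + 1 < N) (j : Fin N)
    (h0 : (j : ℕ) ≠ k) (h1 : (j : ℕ) ≠ k + 1) : swapAt mu k hk j = mu j := by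
  simp [swapAt, h0, h1]

lemma bad_sum_zero (n N : ℕ) (lam : Fin N → ℕ)
    (hlam : ∀ i j : Fin N, i ≤ j → lam j ≤ lam i) :
    ∑ mu ∈ (Fintype.piFinset fun i : Fin N => Finset.Icc ((i:ℤ)+1-(N:ℤ)) (lam i)).filter
        (fun mu => ¬ ∀ i j : Fin N, (i:ℕ)+1 = (j:ℕ) → (lam j : ℤ) ≤ mu i),
      X (Fin.last n) ^ (∑ i, ((lam i:ℤ) - mu i)).toNat *
        rename Fin.castSucc (schurInt n N mu) = 0 := by
  classical
  set s := (Fintype.piFinset fun i : Fin N => Finset.Icc ((i:ℤ)+1-(N:ℤ)) (lam i)).filter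
      (fun mu => ¬ ∀ i j : Fin N, (i:ℕ)+1 = (j:ℕ) → (lam j : ℤ) ≤ mu i) with hs
  have hQ : ∀ mu ∈ s, ∃ k, Qb lam mu k := by
    intro mu hmu
    rw [hs, Finset.mem_filter] at hmu
    obtain ⟨-, hbad⟩ := hmu
    push_neg at hbad
    obtain ⟨i, j, hij, hlt⟩ := hbad
    have hk : (i : ℕ) + 1 < N := by rw [hij]; exact j.2
    refine ⟨(i : ℕ), hk, ?_⟩
    have e1 : (⟨(i:ℕ), Nat.lt_of_succ_lt hk⟩ : Fin N) = i := Fin.ext rfl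
    have e2 : (⟨(i:ℕ)+1, hk⟩ : Fin N) = j := Fin.ext hij
    rw [e1, e2]
    exact hlt
  -- membership facts
  have hmem : ∀ mu ∈ s, ∀ i : Fin N, (i:ℤ)+1-(N:ℤ) ≤ mu i ∧ mu i ≤ lam i := by
    intro mu hmu i
    rw [hs, Finset.mem_filter, Fintype.mem_piFinset] at hmu
    exact Finset.mem_Icc.1 (hmu.1 i)
  refine Finset.sum_involution
    (fun mu hmu => swapAt mu (Nat.find (hQ mu hmu)) (Nat.find_spec (hQ mu hmu)).choose)
    ?_ ?_ ?_ ?_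
  · -- cancellation
    intro mu hmu
    set k0 := Nat.find (hQ mu hmu)
    have hk0 : k0 + 1 < N := (Nat.find_spec (hQ mu hmu)).choose
    have he : (∑ i, ((lam i:ℤ) - swapAt mu k0 hk0 i)).toNat
        = (∑ i, ((lam i:ℤ) - mu i)).toNat := by
      rw [Finset.sum_sub_distrib, Finset.sum_sub_distrib, sum_swapAt]
    rw [he, schurInt_swapAt n N mu k0 hk0, map_neg, mul_neg, add_neg_cancel]
  · -- g ≠ id when f ≠ 0
    intro mu hmu hne heq
    apply hne
    rw [schurInt_eq_zero_of_fixed n N mu (Nat.find (hQ mu hmu))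
      (Nat.find_spec (hQ mu hmu)).choose heq]
    simp
  · -- g_mem
    intro mu hmu
    set k0 := Nat.find (hQ mu hmu) with hk0def
    have hk0 : k0 + 1 < N := (Nat.find_spec (hQ mu hmu)).choose
    have hbadk0 : mu ⟨k0, Nat.lt_of_succ_lt hk0⟩ < (lam ⟨k0+1, hk0⟩ : ℤ) :=
      (Nat.find_spec (hQ mu hmu)).choose_spec
    set i0 : Fin N := ⟨k0, Nat.lt_of_succ_lt hk0⟩
    set i1 : Fin N := ⟨k0+1, hk0⟩
    have hle : lam i1 ≤ lam i0 := hlam i0 i1 (by simp [i0, i1, Fin.le_def])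
    try dsimp only
    refine Finset.mem_filter.2 ⟨Fintype.mem_piFinset.2 ?_, ?_⟩
    · intro i
      rw [Finset.mem_Icc]
      rcases eq_or_ne (i : ℕ) k0 with h0 | h0
      · have hi : i = i0 := Fin.ext h0
        rw [swapAt_apply_fst mu k0 hk0 i h0, hi]
        have e1 : (⟨k0+1, hk0⟩ : Fin N) = i1 := rfl
        rw [e1]
        have h1 := (hmem mu hmu i1).1
        have h2 := (hmem mu hmu i1).2
        have v0 : (i0:ℕ) = k0 := rfl
        have v1 : (i1:ℕ) = k0+1 := rfl
        have h3 : (lam i1 : ℤ) ≤ lam i0 := by exact_mod_cast hle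
        omega
      · rcases eq_or_ne (i : ℕ) (k0+1) with h1 | h1
        · have hi : i = i1 := Fin.ext h1
          rw [swapAt_apply_snd mu k0 hk0 i h1, hi]
          have e0 : (⟨k0, Nat.lt_of_succ_lt hk0⟩ : Fin N) = i0 := rfl
          rw [e0]
          have h2 := (hmem mu hmu i0).1
          have h3 := (hmem mu hmu i0).2
          have v0 : (i0:ℕ) = k0 := rfl
          have v1 : (i1:ℕ) = k0+1 := rfl
          omega
        · rw [swapAt_apply_of_ne mu k0 hk0 i h0 h1]
          have h := hmem mu hmu i
          omega
    · intro hgood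
      have hg := hgood i0 i1 rfl
      rw [swapAt_apply_fst mu k0 hk0 i0 rfl] at hg
      have h2 := (hmem mu hmu i1).2
      have e1 : (⟨k0+1, hk0⟩ : Fin N) = i1 := rfl
      rw [e1] at hg
      omega
  · -- involution
    intro mu hmu
    set k0 := Nat.find (hQ mu hmu) with hk0def
    have hk0 : k0 + 1 < N := (Nat.find_spec (hQ mu hmu)).choose
    have hbadk0 : mu ⟨k0, Nat.lt_of_succ_lt hk0⟩ < (lam ⟨k0+1, hk0⟩ : ℤ) :=
      (Nat.find_spec (hQ mu hmu)).choose_spec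
    set nu := swapAt mu k0 hk0 with hnu
    have hfind : ∀ (hmem2 : ∃ k, Qb lam nu k), Nat.find hmem2 = k0 := by
      intro hmem2
      rw [Nat.find_eq_iff]
      constructor
      · refine ⟨hk0, ?_⟩
        rw [hnu, swapAt_apply_fst mu k0 hk0 _ rfl]
        have := (hmem mu hmu ⟨k0+1, hk0⟩).2
        omega
      · rintro m hm ⟨hkm, hbm⟩
        have hmin := Nat.find_min (hQ mu hmu) (show m < k0 from hm)
        apply hmin
        refine ⟨hkm, ?_⟩
        have hv : nu ⟨m, Nat.lt_of_succ_lt hkm⟩ = mu ⟨m, Nat.lt_of_succ_lt hkm⟩ := by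
          apply swapAt_apply_of_ne
          · simp; omega
          · simp; omega
        rwa [hv] at hbm
    -- now conclude
    try dsimp only
    refine Eq.trans (swapAt_congr _ _ k0 (hfind _) _ hk0) ?_
    exact swapAt_swapAt mu k0 hk0

lemma good_sum (n N : ℕ) (lam : Fin N → ℕ) :
    ∑ mu ∈ (Fintype.piFinset fun i : Fin N => Finset.Icc ((i:ℤ)+1-(N:ℤ)) (lam i)).filter
        (fun mu => ∀ i j : Fin N, (i:ℕ)+1 = (j:ℕ) → (lam j : ℤ) ≤ mu i),
      X (Fin.last n) ^ (∑ i, ((lam i:ℤ) - mu i)).toNat *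
        rename Fin.castSucc (schurInt n N mu) =
    ∑ mu ∈ (Fintype.piFinset fun i : Fin N => Finset.range (lam i + 1)).filter
        (fun mu => (∀ i : Fin N, mu i ≤ lam i) ∧
          ∀ i j : Fin N, (i : ℕ) + 1 = (j : ℕ) → lam j ≤ mu i),
      rename Fin.castSucc (schur n N mu) * X (Fin.last n) ^ (∑ i, lam i - ∑ i, mu i) := by
  classical
  rw [← Finset.sum_filter_add_sum_filter_not _ (fun mu : Fin N → ℤ => ∀ i, 0 ≤ mu i)]
  have hzero : ∑ mu ∈ ((Fintype.piFinset fun i : Fin N =>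
        Finset.Icc ((i:ℤ)+1-(N:ℤ)) (lam i)).filter
        (fun mu => ∀ i j : Fin N, (i:ℕ)+1 = (j:ℕ) → (lam j : ℤ) ≤ mu i)).filter
        (fun mu => ¬ ∀ i, 0 ≤ mu i),
      X (Fin.last n) ^ (∑ i, ((lam i:ℤ) - mu i)).toNat *
        rename Fin.castSucc (schurInt n N mu) = 0 := by
    refine Finset.sum_eq_zero fun mu hmu => ?_
    rw [Finset.mem_filter, Finset.mem_filter] at hmu
    obtain ⟨⟨hpi, hgood⟩, hneg⟩ := hmu
    push_neg at hneg
    obtain ⟨i, hi⟩ := hneg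
    have hiN : (i : ℕ) + 1 = N := by
      by_contra hne
      have hlt : (i : ℕ) + 1 < N := by have := i.2; omega
      have := hgood i ⟨(i:ℕ)+1, hlt⟩ rfl
      have : (0:ℤ) ≤ mu i := le_trans (by positivity) this
      omega
    have hdet : schurInt n N mu = 0 := by
      refine Matrix.det_eq_zero_of_row_eq_zero i fun j => ?_
      show hInt n (mu i + (j:ℤ) - (i:ℤ)) = 0
      rw [hInt, if_neg]
      have := j.2
      omega
    rw [hdet]
    simp
  rw [hzero, add_zero]
  refine Finset.sum_nbij'
    (i := fun muZ : Fin N → ℤ => fun i => (muZ i).toNat)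
    (j := fun muN : Fin N → ℕ => fun i => (muN i : ℤ))
    ?_ ?_ ?_ ?_ ?_
  · intro mu hmu
    rw [Finset.mem_filter, Finset.mem_filter, Fintype.mem_piFinset] at hmu
    obtain ⟨⟨hpi, hgood⟩, hpos⟩ := hmu
    rw [Finset.mem_filter, Fintype.mem_piFinset]
    refine ⟨fun i => ?_, fun i => ?_, fun i j hij => ?_⟩
    · have h1 := Finset.mem_Icc.1 (hpi i)
      have h2 := hpos i
      rw [Finset.mem_range]
      try dsimp only
      omega
    · have h1 := Finset.mem_Icc.1 (hpi i)
      have h2 := hpos i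
      dsimp only
      omega
    · have h1 := hgood i j hij
      have h2 := hpos i
      dsimp only
      omega
  · intro mu hmu
    rw [Finset.mem_filter, Fintype.mem_piFinset] at hmu
    obtain ⟨hpi, hle, hgood⟩ := hmu
    rw [Finset.mem_filter, Finset.mem_filter, Fintype.mem_piFinset]
    refine ⟨⟨fun i => ?_, fun i j hij => ?_⟩, fun i => ?_⟩
    · rw [Finset.mem_Icc]
      have h1 := hle i
      have := i.2
      try dsimp only
      constructor
      · have : ((i:ℕ):ℤ) + 1 - N ≤ 0 := by omega
        omega
      · omega
    · dsimp only
      exact_mod_cast hgood i j hij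
    · dsimp only
      positivity
  · intro mu hmu
    rw [Finset.mem_filter, Finset.mem_filter] at hmu
    obtain ⟨⟨-, -⟩, hpos⟩ := hmu
    funext i
    dsimp only
    have := hpos i
    omega
  · intro mu hmu
    funext i
    dsimp only
    simp
  · intro mu hmu
    rw [Finset.mem_filter, Finset.mem_filter, Fintype.mem_piFinset] at hmu
    obtain ⟨⟨hpi, hgood⟩, hpos⟩ := hmu
    have hle : ∀ i, (mu i).toNat ≤ lam i := by
      intro i
      have h1 := Finset.mem_Icc.1 (hpi i)
      have h2 := hpos i
      omega
    have hexp : (∑ i, ((lam i:ℤ) - mu i)).toNat = ∑ i, lam i - ∑ i, (mu i).toNat := by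
      have h1 : ∑ i, ((lam i:ℤ) - mu i)
          = ((∑ i, lam i : ℕ) : ℤ) - ((∑ i, (mu i).toNat : ℕ) : ℤ) := by
        push_cast
        rw [← Finset.sum_sub_distrib]
        refine Finset.sum_congr rfl fun i _ => ?_
        have := hpos i
        omega
      have h2 : (∑ i, (mu i).toNat) ≤ ∑ i, lam i :=
        Finset.sum_le_sum fun i _ => hle i
      omega
    have hs : schurInt n N mu = schur n N (fun i => (mu i).toNat) := by
      rw [schurInt, schur]
      congr 1
      funext i j
      show hInt n (mu i + (j:ℤ) - (i:ℤ)) = hInt n ((((mu i).toNat : ℕ):ℤ) + (j:ℤ) - (i:ℤ))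
      congr 1
      have := hpos i
      omega
    rw [hexp, hs, mul_comm]

theorem schur_branching (n N : ℕ) (lam : Fin N → ℕ)
    (hlam : ∀ i j : Fin N, i ≤ j → lam j ≤ lam i) :
    schur (n + 1) N lam =
      ∑ mu ∈ (Fintype.piFinset fun i : Fin N => Finset.range (lam i + 1)).filter
          (fun mu => (∀ i : Fin N, mu i ≤ lam i) ∧
            ∀ i j : Fin N, (i : ℕ) + 1 = (j : ℕ) → lam j ≤ mu i),
        rename Fin.castSucc (schur n N mu) *
          X (Fin.last n) ^ (∑ i, lam i - ∑ i, mu i) := by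
  classical
  rw [step1]
  rw [← Finset.sum_filter_add_sum_filter_not
      (Fintype.piFinset fun i : Fin N => Finset.Icc ((i:ℤ)+1-(N:ℤ)) (lam i))
      (fun mu => ∀ i j : Fin N, (i:ℕ)+1 = (j:ℕ) → (lam j : ℤ) ≤ mu i)]
  rw [bad_sum_zero n N lam hlam, add_zero, good_sum]
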